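/- arXiv:2109.06510 — 4 statements merged into one kernel-verified Lean document; each statement's English description precedes it below -/
import Mathlib

section
/- For every real number α with 0 < α < 1, the sequence b_k = (1/(2-α))·[(k+1)^{2-α} - k^{2-α}] - (1/2)·[(k+1)^{1-α} + k^{1-α}] (for k ≥ 0) is positive, i.e., b_k > 0 for all k ≥ 0. -/
open intervalIntegral Set

private lemma trapezoid_lt (p : ℝ) (hp0 : 0 < p) (hp1 : p < 1) (a : ℝ) (ha : 0 ≤ a) :
    (a ^ p + (a + 1) ^ p) / 2 < ∫ t in a..(a + 1), t ^ p := by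
  set g : ℝ → ℝ := fun t => t ^ p with hg
  set L : ℝ → ℝ := fun t => ((a + 1) * g a - a * g (a + 1)) + (g (a + 1) - g a) * t with hL
  have hsc := Real.strictConcaveOn_rpow hp0 hp1
  have hcc := hsc.concaveOn
  have hab : a < a + 1 := by linarith
  have hIL : ∫ t in a..(a + 1), L t = (g a + g (a + 1)) / 2 := by
    rw [hL]
    rw [intervalIntegral.integral_add intervalIntegrable_const
      ((intervalIntegral.intervalIntegrable_id).const_mul _)]
    rw [intervalIntegral.integral_const, intervalIntegral.integral_const_mul,
      integral_id]
    simp only [smul_eq_mul]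
    ring
  have hLcont : ContinuousOn L (Icc a (a + 1)) := (by continuity : Continuous L).continuousOn
  have hgcont : ContinuousOn g (Icc a (a + 1)) := by
    apply ContinuousOn.rpow_const continuousOn_id
    intro x hx
    right; exact hp0.le
  have hle : ∀ x ∈ Ioc a (a + 1), L x ≤ g x := by
    intro x hx
    have h1 : (a + 1 - x) + (x - a) = 1 := by ring
    have := hcc.2 (Set.mem_Ici.2 ha) (Set.mem_Ici.2 (by linarith : (0:ℝ) ≤ a + 1))
      (by linarith [hx.1, hx.2] : 0 ≤ a + 1 - x) (by linarith [hx.1] : 0 ≤ x - a) h1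
    simp only [smul_eq_mul] at this
    have hx' : (a + 1 - x) * a + (x - a) * (a + 1) = x := by ring
    rw [hx'] at this
    calc L x = (a + 1 - x) * g a + (x - a) * g (a + 1) := by rw [hL]; ring
      _ ≤ g x := this
  have hmid : L (a + 1/2) < g (a + 1/2) := by
    have := hsc.2 (Set.mem_Ici.2 ha) (Set.mem_Ici.2 (by linarith : (0:ℝ) ≤ a + 1))
      (by linarith : a ≠ a + 1) (by norm_num : (0:ℝ) < 1/2) (by norm_num : (0:ℝ) < 1/2)
      (by norm_num)
    simp only [smul_eq_mul] at this
    have hx' : (1/2 : ℝ) * a + (1/2) * (a + 1) = a + 1/2 := by ring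
    rw [hx'] at this
    calc L (a + 1/2) = (1/2) * g a + (1/2) * g (a + 1) := by rw [hL]; ring
      _ < g (a + 1/2) := this
  have key := intervalIntegral.integral_lt_integral_of_continuousOn_of_le_of_exists_lt hab
    hLcont hgcont hle ⟨a + 1/2, ⟨by linarith, by linarith⟩, hmid⟩
  rw [hIL] at key
  linarith [key]

/-- For every real α with 0 < α < 1, the L2-type coefficients
`b_k = (1/(2-α))[(k+1)^(2-α) - k^(2-α)] - (1/2)[(k+1)^(1-α) + k^(1-α)]` are positive. -/
theorem stmt1 (α : ℝ) (hα0 : 0 < α) (hα1 : α < 1) (b : ℕ → ℝ)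
    (hb : ∀ k : ℕ, b k =
      (1 / (2 - α)) * (((k : ℝ) + 1) ^ (2 - α) - (k : ℝ) ^ (2 - α)) -
      (1 / 2) * (((k : ℝ) + 1) ^ (1 - α) + (k : ℝ) ^ (1 - α))) :
    ∀ k : ℕ, 0 < b k := by
  intro k
  set p : ℝ := 1 - α with hp
  have hp0 : 0 < p := by linarith
  have hp1 : p < 1 := by linarith
  set a : ℝ := (k : ℝ) with ha
  have ha0 : 0 ≤ a := Nat.cast_nonneg k
  have hI : ∫ t in a..(a + 1), t ^ p = ((a + 1) ^ (p + 1) - a ^ (p + 1)) / (p + 1) :=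
    integral_rpow (Or.inl (by linarith))
  have htrap := trapezoid_lt p hp0 hp1 a ha0
  rw [hI] at htrap
  have h2 : (2 : ℝ) - α = p + 1 := by ring
  rw [hb k, h2]
  have hp1' : (0:ℝ) < p + 1 := by linarith
  have : (1 / (p + 1)) * ((a + 1) ^ (p + 1) - a ^ (p + 1)) =
      ((a + 1) ^ (p + 1) - a ^ (p + 1)) / (p + 1) := by ring
  rw [this]
  have : (1 / 2 : ℝ) * ((a + 1) ^ (1 - α) + a ^ (1 - α)) = (a ^ p + (a + 1) ^ p) / 2 := by
    rw [← hp]; ring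
  rw [this]
  linarith
end

section
/- For every real number α with 0 < α < 1, the sequence b_k = (1/(2-α))·[(k+1)^{2-α} - k^{2-α}] - (1/2)·[(k+1)^{1-α} + k^{1-α}] is strictly decreasing in k, i.e., b_{k+1} < b_k for all k ≥ 0. -/
open Set intervalIntegral

/-- `t ↦ t ^ (-α)` is strictly convex on `(0, ∞)` for `0 < α`. -/
lemma aux_strictConvex {α : ℝ} (hα0 : 0 < α) :
    StrictConvexOn ℝ (Ioi (0:ℝ)) (fun t : ℝ => t ^ (-α)) := by
  have hderiv : ∀ x ∈ Ioi (0:ℝ), deriv (fun t : ℝ => t ^ (-α)) x = -α * x ^ (-α - 1) := by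
    intro x hx
    exact (Real.hasDerivAt_rpow_const (Or.inl (ne_of_gt hx))).deriv
  apply strictConvexOn_of_deriv2_pos (convex_Ioi 0)
  · intro x hx
    exact (Real.continuousAt_rpow_const x (-α) (Or.inl (ne_of_gt hx))).continuousWithinAt
  · intro x hx
    rw [interior_Ioi] at hx
    have hx0 : (0:ℝ) < x := mem_Ioi.mp hx
    have hEq : deriv (fun t : ℝ => t ^ (-α)) =ᶠ[nhds x] (fun t : ℝ => -α * t ^ (-α - 1)) := by
      filter_upwards [Ioi_mem_nhds hx0] with t ht using hderiv t ht
    have h2 : deriv^[2] (fun t : ℝ => t ^ (-α)) x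
        = deriv (fun t : ℝ => -α * t ^ (-α - 1)) x := by
      simp only [Function.iterate_succ, Function.iterate_zero, Function.comp_apply, id]
      exact Filter.EventuallyEq.deriv_eq hEq
    rw [h2]
    have hd : HasDerivAt (fun t : ℝ => -α * t ^ (-α - 1))
        (-α * ((-α - 1) * x ^ (-α - 1 - 1))) x :=
      (Real.hasDerivAt_rpow_const (Or.inl (ne_of_gt hx0))).const_mul (-α)
    rw [hd.deriv]
    have heq : -α * ((-α - 1) * x ^ (-α - 1 - 1)) = α * (α + 1) * x ^ (-α - 1 - 1) := by ring
    rw [heq]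
    have hp : (0:ℝ) < x ^ (-α - 1 - 1) := Real.rpow_pos_of_pos hx0 _
    positivity

/-- Trapezoid strict inequality. -/
lemma aux_trapezoid {α : ℝ} (hα0 : 0 < α) (hα1 : α < 1) {x : ℝ} (hx : 0 < x) :
    (x + 1) ^ (1 - α) - x ^ (1 - α)
      < (1 / 2) * ((1 - α) * (x + 1) ^ (-α) + (1 - α) * x ^ (-α)) := by
  have h1α : (0:ℝ) < 1 - α := by linarith
  have hx1 : (0:ℝ) < x + 1 := by linarith
  have hcont : ContinuousOn (fun t : ℝ => (1 - α) * t ^ (-α)) (Icc x (x + 1)) := by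
    apply continuousOn_const.mul
    intro t ht
    have ht0 : (0:ℝ) < t := lt_of_lt_of_le hx ht.1
    exact (Real.continuousAt_rpow_const t (-α) (Or.inl (ne_of_gt ht0))).continuousWithinAt
  -- FTC : LHS = ∫ (1-α) t^(-α)
  have hftc : (∫ t in x..(x + 1), (1 - α) * t ^ (-α))
      = (x + 1) ^ (1 - α) - x ^ (1 - α) := by
    refine integral_eq_sub_of_hasDerivAt (f := fun t : ℝ => t ^ (1 - α)) ?_ ?_
    · intro t ht
      rw [uIcc_of_le (by linarith)] at ht
      have ht0 : (0:ℝ) < t := lt_of_lt_of_le hx ht.1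
      have := Real.hasDerivAt_rpow_const (x := t) (p := 1 - α) (Or.inl (ne_of_gt ht0))
      have he : (1 : ℝ) - α - 1 = -α := by ring
      rwa [he] at this
    · rw [intervalIntegrable_iff_integrableOn_Icc_of_le (by linarith)]
      exact hcont.integrableOn_compact isCompact_Icc
  -- the linear chord function
  set L : ℝ → ℝ := fun t => (1 - α) * (x ^ (-α) + (t - x) * ((x + 1) ^ (-α) - x ^ (-α)))
    with hL
  have hLint : (∫ t in x..(x + 1), L t)
      = (1 / 2) * ((1 - α) * (x + 1) ^ (-α) + (1 - α) * x ^ (-α)) := by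
    set c : ℝ := (1 - α) * x ^ (-α) with hc
    set d : ℝ := (1 - α) * ((x + 1) ^ (-α) - x ^ (-α)) with hd
    have e0 : (∫ t in x..(x + 1), L t) = ∫ t in x..(x + 1), (c + d * (t - x)) := by
      apply integral_congr; intro t ht; simp only [hL, hc, hd]; ring
    have e1 : (∫ t in x..(x + 1), (c + d * (t - x))) = ∫ u in (0:ℝ)..1, (c + d * u) := by
      have := intervalIntegral.integral_comp_sub_right (a := x) (b := x + 1)
        (fun u => c + d * u) x
      simpa using this
    have e2 : (∫ u in (0:ℝ)..1, (c + d * u))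
        = (∫ u in (0:ℝ)..1, c) + ∫ u in (0:ℝ)..1, d * u :=
      integral_add intervalIntegrable_const
        ((continuous_const.mul continuous_id).intervalIntegrable _ _)
    rw [e0, e1, e2, integral_const, integral_const_mul]
    rw [show (∫ u in (0:ℝ)..1, u) = 1 / 2 by rw [integral_id]; norm_num]
    simp only [smul_eq_mul, hc, hd]
    ring
  rw [← hftc, ← hLint]
  -- strict integral comparison via convexity
  have hconv := aux_strictConvex hα0
  apply integral_lt_integral_of_continuousOn_of_le_of_exists_lt (by linarith) hcont
  · exact (continuous_const.mul
      (continuous_const.add ((continuous_id.sub continuous_const).mul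
        continuous_const))).continuousOn
  · -- pointwise ≤ on Ioc
    intro t ht
    have hs1 : t - x ≤ 1 := by linarith [ht.2]
    have hs0 : 0 < t - x := by linarith [ht.1]
    have key : t ^ (-α) ≤ (1 - (t - x)) * x ^ (-α) + (t - x) * (x + 1) ^ (-α) := by
      have h := hconv.convexOn.2 (mem_Ioi.mpr hx) (mem_Ioi.mpr hx1)
        (by linarith : (0:ℝ) ≤ 1 - (t - x)) (by linarith : (0:ℝ) ≤ t - x)
        (by ring : (1 - (t - x)) + (t - x) = 1)
      have harg : (1 - (t - x)) • x + (t - x) • (x + 1) = t := by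
        simp only [smul_eq_mul]; ring
      rw [harg] at h
      simpa [smul_eq_mul] using h
    have h2 : (1 - α) * t ^ (-α)
        ≤ (1 - α) * ((1 - (t - x)) * x ^ (-α) + (t - x) * (x + 1) ^ (-α)) :=
      mul_le_mul_of_nonneg_left key h1α.le
    calc (1 - α) * t ^ (-α)
        ≤ (1 - α) * ((1 - (t - x)) * x ^ (-α) + (t - x) * (x + 1) ^ (-α)) := h2
      _ = L t := by simp only [hL]; ring
  · -- strict at midpoint
    refine ⟨x + 1/2, ⟨by linarith, by linarith⟩, ?_⟩
    have key := hconv.2 (mem_Ioi.mpr hx) (mem_Ioi.mpr hx1) (by linarith : x ≠ x + 1)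
      (by norm_num : (0:ℝ) < 1/2) (by norm_num : (0:ℝ) < 1/2) (by norm_num)
    have harg : (1/2 : ℝ) • x + (1/2 : ℝ) • (x + 1) = x + 1/2 := by
      simp only [smul_eq_mul]; ring
    rw [harg] at key
    simp only [smul_eq_mul] at key
    have h3 : (1 - α) * (x + 1/2) ^ (-α)
        < (1 - α) * (1/2 * x ^ (-α) + 1/2 * (x + 1) ^ (-α)) :=
      (mul_lt_mul_iff_right₀ h1α).mpr key
    calc (1 - α) * (x + 1/2) ^ (-α)
        < (1 - α) * (1/2 * x ^ (-α) + 1/2 * (x + 1) ^ (-α)) := h3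
      _ = L (x + 1/2) := by simp only [hL]; ring

/-- For every real α with 0 < α < 1, the L2-type coefficients `b_k` are strictly decreasing. -/
theorem stmt2 (α : ℝ) (hα0 : 0 < α) (hα1 : α < 1) (b : ℕ → ℝ)
    (hb : ∀ k : ℕ, b k =
      (1 / (2 - α)) * (((k : ℝ) + 1) ^ (2 - α) - (k : ℝ) ^ (2 - α)) -
      (1 / 2) * (((k : ℝ) + 1) ^ (1 - α) + (k : ℝ) ^ (1 - α))) :
    ∀ k : ℕ, b (k + 1) < b k := by
  have h2α : (0:ℝ) < 2 - α := by linarith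
  set F : ℝ → ℝ := fun x =>
    (1 / (2 - α)) * ((x + 1) ^ (2 - α) - x ^ (2 - α)) -
    (1 / 2) * ((x + 1) ^ (1 - α) + x ^ (1 - α)) with hF
  have hanti : StrictAntiOn F (Ici (0:ℝ)) := by
    apply strictAntiOn_of_deriv_neg (convex_Ici 0)
    · -- continuity
      have hc : ∀ p : ℝ, 0 < p → ContinuousOn (fun x : ℝ => x ^ p) (Ici (0:ℝ)) := fun p hp =>
        continuousOn_id.rpow_const (fun x _ => Or.inr hp.le)
      have hc' : ∀ p : ℝ, 0 < p → ContinuousOn (fun x : ℝ => (x + 1) ^ p) (Ici (0:ℝ)) :=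
        fun p hp => (continuousOn_id.add continuousOn_const).rpow_const
          (fun x _ => Or.inr hp.le)
      exact ((continuousOn_const.mul ((hc' _ h2α).sub (hc _ h2α))).sub
        (continuousOn_const.mul ((hc' _ (by linarith)).add (hc _ (by linarith)))))
    · intro x hx
      rw [interior_Ici] at hx
      have hx0 : (0:ℝ) < x := mem_Ioi.mp hx
      have hx1 : (0:ℝ) < x + 1 := by linarith
      have d1 : HasDerivAt (fun x : ℝ => (x + 1) ^ (2 - α)) ((2 - α) * (x + 1) ^ (1 - α)) x := by
        have := (Real.hasDerivAt_rpow_const (x := x + 1) (p := 2 - α)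
          (Or.inl (ne_of_gt hx1))).comp x ((hasDerivAt_id x).add_const 1)
        have he : (2 : ℝ) - α - 1 = 1 - α := by ring
        simpa [he, Function.comp_def] using this
      have d2 : HasDerivAt (fun x : ℝ => x ^ (2 - α)) ((2 - α) * x ^ (1 - α)) x := by
        have := Real.hasDerivAt_rpow_const (x := x) (p := 2 - α) (Or.inl (ne_of_gt hx0))
        have he : (2 : ℝ) - α - 1 = 1 - α := by ring
        rwa [he] at this
      have d3 : HasDerivAt (fun x : ℝ => (x + 1) ^ (1 - α)) ((1 - α) * (x + 1) ^ (-α)) x := by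
        have := (Real.hasDerivAt_rpow_const (x := x + 1) (p := 1 - α)
          (Or.inl (ne_of_gt hx1))).comp x ((hasDerivAt_id x).add_const 1)
        have he : (1 : ℝ) - α - 1 = -α := by ring
        simpa [he, Function.comp_def] using this
      have d4 : HasDerivAt (fun x : ℝ => x ^ (1 - α)) ((1 - α) * x ^ (-α)) x := by
        have := Real.hasDerivAt_rpow_const (x := x) (p := 1 - α) (Or.inl (ne_of_gt hx0))
        have he : (1 : ℝ) - α - 1 = -α := by ring
        rwa [he] at this
      have dF : HasDerivAt F
          ((1 / (2 - α)) * ((2 - α) * (x + 1) ^ (1 - α) - (2 - α) * x ^ (1 - α)) -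
           (1 / 2) * ((1 - α) * (x + 1) ^ (-α) + (1 - α) * x ^ (-α))) x :=
        (((d1.sub d2).const_mul _).sub ((d3.add d4).const_mul _))
      rw [dF.deriv]
      have hsimp : (1 / (2 - α)) * ((2 - α) * (x + 1) ^ (1 - α) - (2 - α) * x ^ (1 - α))
          = (x + 1) ^ (1 - α) - x ^ (1 - α) := by
        field_simp
      rw [hsimp, sub_neg]
      exact aux_trapezoid hα0 hα1 hx0
  intro k
  have h1 : b (k + 1) = F ((k : ℝ) + 1) := by
    rw [hb]; push_cast; rfl
  have h2 : b k = F (k : ℝ) := by rw [hb]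
  rw [h1, h2]
  exact hanti (mem_Ici.mpr (Nat.cast_nonneg k)) (mem_Ici.mpr (by positivity))
    (by linarith [Nat.cast_nonneg (α := ℝ) k])
end

section
/- For α ∈ (0, 0.3624), one has c̃_1 - c_0 < 0, where c̃_1 = a_1 + b_1 + b_2 - b_0 and c_0 = a_0 + b_0, with a_k, b_k the L2-type coefficients. In particular this follows from a_1 < a_0, b_1 < b_0, and b_2 < b_0. -/
/-- For α ∈ (0, 0.3624), one has c̃₁ - c₀ < 0 where c̃₁ = a₁ + b₁ + b₂ - b₀ and
c₀ = a₀ + b₀, with a_k, b_k the L2-type coefficients. -/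
theorem stmt4 (α : ℝ) (hα0 : 0 < α) (hα1 : α < 0.3624)
    (a b : ℕ → ℝ)
    (ha : ∀ k : ℕ, a k = ((k : ℝ) + 1) ^ (1 - α) - (k : ℝ) ^ (1 - α))
    (hb : ∀ k : ℕ, b k =
      (1 / (2 - α)) * (((k : ℝ) + 1) ^ (2 - α) - (k : ℝ) ^ (2 - α)) -
      (1 / 2) * (((k : ℝ) + 1) ^ (1 - α) + (k : ℝ) ^ (1 - α)))
    (c₀ ctilde₁ : ℝ)
    (hc₀ : c₀ = a 0 + b 0)
    (hct₁ : ctilde₁ = a 1 + b 1 + b 2 - b 0) :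
    ctilde₁ - c₀ < 0 := by
  have hα1' : α < 1 := by norm_num at hα1 ⊢; linarith
  have h2α : (0:ℝ) < 2 - α := by linarith
  have h0a : (0:ℝ) ^ (1 - α) = 0 := Real.zero_rpow (by linarith)
  have h0b : (0:ℝ) ^ (2 - α) = 0 := Real.zero_rpow (by linarith)
  have h1a : (1:ℝ) ^ (1 - α) = 1 := Real.one_rpow _
  have h1b : (1:ℝ) ^ (2 - α) = 1 := Real.one_rpow _
  have h2s : (2:ℝ) ^ (2 - α) = 2 * 2 ^ (1 - α) := by
    rw [show (2:ℝ) - α = 1 + (1 - α) by ring, Real.rpow_add (by norm_num), Real.rpow_one]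
  have h3s : (3:ℝ) ^ (2 - α) = 3 * 3 ^ (1 - α) := by
    rw [show (2:ℝ) - α = 1 + (1 - α) by ring, Real.rpow_add (by norm_num), Real.rpow_one]
  -- key bound : 3^(3/5) ≤ 1.9332
  have h35 : (3:ℝ) ^ ((3:ℝ)/5) ≤ 1.9332 := by
    have hpos : (0:ℝ) ≤ (3:ℝ) ^ ((3:ℝ)/5) := (Real.rpow_pos_of_pos (by norm_num) _).le
    have hp5 : ((3:ℝ) ^ ((3:ℝ)/5)) ^ (5:ℕ) = 27 := by
      rw [← Real.rpow_natCast ((3:ℝ) ^ ((3:ℝ)/5)) 5, ← Real.rpow_mul (by norm_num)]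
      norm_num
    have h5 : ((3:ℝ) ^ ((3:ℝ)/5)) ^ (5:ℕ) ≤ (1.9332:ℝ) ^ (5:ℕ) := by
      rw [hp5]; norm_num
    exact le_of_pow_le_pow_left₀ (by norm_num) (by norm_num) h5
  set t : ℝ := 1 - α with htdef
  have ht0 : (0.6376 : ℝ) < t := by rw [htdef]; norm_num at hα1 ⊢; linarith
  have ht1 : t < 1 := by rw [htdef]; linarith
  -- chord bound
  have hx : (3:ℝ) ^ t ≤ (1 - t)/(2/5) * 1.9332 + (t - 3/5)/(2/5) * 3 := by
    have hc := convexOn_exp.2 (Set.mem_univ ((3:ℝ)/5 * Real.log 3)) (Set.mem_univ (Real.log 3))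
      (show (0:ℝ) ≤ (1 - t)/(2/5) by norm_num; linarith)
      (show (0:ℝ) ≤ (t - 3/5)/(2/5) by norm_num at ht0 ⊢; linarith)
      (show (1 - t)/(2/5) + (t - 3/5)/(2/5) = 1 by ring)
    simp only [smul_eq_mul] at hc
    have he1 : (1 - t)/(2/5) * ((3:ℝ)/5 * Real.log 3) + (t - 3/5)/(2/5) * Real.log 3
        = t * Real.log 3 := by ring
    rw [he1] at hc
    have he2 : Real.exp (t * Real.log 3) = (3:ℝ) ^ t := by
      rw [Real.rpow_def_of_pos (by norm_num), mul_comm]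
    have he3 : Real.exp ((3:ℝ)/5 * Real.log 3) = (3:ℝ) ^ ((3:ℝ)/5) := by
      rw [Real.rpow_def_of_pos (by norm_num), mul_comm]
    have he4 : Real.exp (Real.log 3) = (3:ℝ) := Real.exp_log (by norm_num)
    rw [he2, he3, he4] at hc
    nlinarith [h35, ht1]
  have hkey : (3:ℝ) ^ t * (5 - t) < 9 + 3 * t := by
    nlinarith [hx, ht0, ht1]
  have hx0 : (0:ℝ) < (3:ℝ) ^ t := Real.rpow_pos_of_pos (by norm_num) _
  have hy0 : (0:ℝ) < (2:ℝ) ^ (1 - α) := Real.rpow_pos_of_pos (by norm_num) _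
  rw [hct₁, hc₀, ha 0, ha 1, hb 0, hb 1, hb 2]
  push_cast
  rw [show ((0:ℝ) + 1) = 1 by norm_num, show (1:ℝ) + 1 = 2 by norm_num,
    show (2:ℝ) + 1 = 3 by norm_num, h0a, h0b, h1a, h1b, h2s, h3s]
  rw [show (2:ℝ) - α = 1 + t by rw [htdef]; ring]
  have h3t : (3:ℝ) ^ (1 - α) = 3 ^ t := by rw [htdef]
  rw [h3t]
  have h1t : (0:ℝ) < 1 + t := by linarith
  have main : (3 * (3:ℝ)^t - 3) / (1 + t) < (3:ℝ)^t / 2 + 3 / 2 := by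
    rw [div_lt_iff₀ h1t]
    nlinarith [hkey]
  have e : (2:ℝ) ^ t - 1 + (1 / (1 + t) * (2 * 2 ^ t - 1) - 1 / 2 * (2 ^ t + 1)) +
          (1 / (1 + t) * (3 * 3 ^ t - 2 * 2 ^ t) - 1 / 2 * ((3:ℝ) ^ t + 2 ^ t)) -
        (1 / (1 + t) * (1 - 0) - 1 / 2 * (1 + 0)) -
      (1 - 0 + (1 / (1 + t) * (1 - 0) - 1 / 2 * (1 + 0)))
      = (3 * (3:ℝ)^t - 3) / (1 + t) - ((3:ℝ)^t / 2 + 3 / 2) := by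
    field_simp
    ring
  rw [e]
  linarith [main]
end

section
/- Let g_k^β = (-1)^k Γ(1+β) / (Γ(β/2 - k + 1) Γ(β/2 + k + 1)) for integers k and β ∈ (1,2). Then g_0^β > 0, g_k^β = g_{-k}^β for all k, and g_k^β < 0 for all k ≠ 0. -/
/-- For β ∈ (1,2) and g_k = (-1)^k Γ(1+β)/(Γ(β/2-k+1)Γ(β/2+k+1)):
g₀ > 0, g_k = g_{-k}, and g_k < 0 for k ≠ 0. -/
theorem stmt18 (β : ℝ) (hβ1 : 1 < β) (hβ2 : β < 2) (g : ℤ → ℝ)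
    (hg : ∀ k : ℤ, g k = (-1 : ℝ) ^ k * Real.Gamma (1 + β) /
      (Real.Gamma (β / 2 - (k : ℝ) + 1) * Real.Gamma (β / 2 + (k : ℝ) + 1))) :
    0 < g 0 ∧ (∀ k : ℤ, g k = g (-k)) ∧ (∀ k : ℤ, k ≠ 0 → g k < 0) := by
  have hA : 0 < Real.Gamma (1 + β) := Real.Gamma_pos_of_pos (by linarith)
  have hzero : 0 < g 0 := by
    rw [hg 0]
    have h1 : 0 < Real.Gamma (β / 2 - (0 : ℝ) + 1) := Real.Gamma_pos_of_pos (by linarith)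
    have h2 : 0 < Real.Gamma (β / 2 + (0 : ℝ) + 1) := Real.Gamma_pos_of_pos (by linarith)
    push_cast
    simpa using div_pos hA (mul_pos h1 h2)
  have hεε : ∀ k : ℤ, ((-1 : ℝ) ^ (-k)) = (-1 : ℝ) ^ k := by
    intro k
    rw [zpow_neg]
    exact inv_eq_of_mul_eq_one_left (by rw [← mul_zpow]; norm_num)
  have hsym : ∀ k : ℤ, g k = g (-k) := by
    intro k
    rw [hg k, hg (-k), hεε k]
    push_cast
    have e1 : β / 2 - -(k : ℝ) + 1 = β / 2 + (k : ℝ) + 1 := by ring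
    have e2 : β / 2 + -(k : ℝ) + 1 = β / 2 - (k : ℝ) + 1 := by ring
    rw [e1, e2, mul_comm (Real.Gamma (β / 2 + (k : ℝ) + 1))]
  have key : ∀ k : ℤ, 1 ≤ k → g k < 0 := by
    intro k hk
    have hk' : (1 : ℝ) ≤ (k : ℝ) := by exact_mod_cast hk
    have hS : 0 < Real.sin (Real.pi * (β / 2)) := by
      apply Real.sin_pos_of_pos_of_lt_pi
      · have := Real.pi_pos; nlinarith
      · have := Real.pi_pos; nlinarith
    have hB : 0 < Real.Gamma (1 - (β / 2 - (k : ℝ) + 1)) :=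
      Real.Gamma_pos_of_pos (by linarith)
    have hC : 0 < Real.Gamma (β / 2 + (k : ℝ) + 1) :=
      Real.Gamma_pos_of_pos (by linarith)
    have hsin : Real.sin (Real.pi * (β / 2 - (k : ℝ) + 1)) =
        -((-1 : ℝ) ^ k) * Real.sin (Real.pi * (β / 2)) := by
      have harg : Real.pi * (β / 2 - (k : ℝ) + 1) =
          Real.pi * (β / 2) + ((1 - k : ℤ) : ℝ) * Real.pi := by push_cast; ring
      rw [harg, Real.sin_add_int_mul_pi]
      have : ((-1 : ℝ)) ^ (1 - k) = -((-1 : ℝ) ^ k) := by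
        rw [sub_eq_add_neg, zpow_add₀ (by norm_num : (-1 : ℝ) ≠ 0), hεε k, zpow_one]
        ring
      rw [this]
    have hrefl := Real.Gamma_mul_Gamma_one_sub (β / 2 - (k : ℝ) + 1)
    have hΓx : Real.Gamma (β / 2 - (k : ℝ) + 1) =
        Real.pi / (-((-1 : ℝ) ^ k) * Real.sin (Real.pi * (β / 2))) /
          Real.Gamma (1 - (β / 2 - (k : ℝ) + 1)) := by
      rw [← hsin, eq_div_iff hB.ne']
      exact hrefl
    rw [hg k, hΓx]
    have hπ := Real.pi_pos
    rcases Int.even_or_odd k with he | ho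
    · rw [he.neg_one_zpow]
      apply div_neg_of_pos_of_neg
      · simpa using hA
      · apply mul_neg_of_neg_of_pos _ hC
        apply div_neg_of_neg_of_pos _ hB
        apply div_neg_of_pos_of_neg hπ
        nlinarith
    · rw [ho.neg_one_zpow]
      apply div_neg_of_neg_of_pos
      · nlinarith
      · apply mul_pos _ hC
        apply div_pos _ hB
        apply div_pos hπ
        nlinarith
  refine ⟨hzero, hsym, fun k hk => ?_⟩
  rcases lt_or_gt_of_ne hk with h | h
  · rw [hsym k]
    exact key (-k) (by omega)
  · exact key k (by omega)
end
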